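/- Every simple signed graph G has at least one fixed set, i.e., fix(G) ≥ 1. -/

import Mathlib

/-- `S` is a fixed set of the conjunctive network of the simple signed graph
with positive edges `pos` and negative edges `neg`. -/
def IsFixedSet {V : Type*} (pos neg : V → V → Prop) (S : Set V) : Prop :=
  ∀ v, v ∈ S ↔ (∀ u, pos u v → u ∈ S) ∧ (∀ u, neg u v → u ∉ S)

/-- Number of fixed points of the conjunctive network. -/
noncomputable def fixc {V : Type*} (pos neg : V → V → Prop) : ℕ :=
  Set.ncard {S : Set V | IsFixedSet pos neg S}

/-- Every simple signed graph has at least one fixed set: `fix(G) ≥ 1`. -/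
theorem stmt8 {V : Type*} [Fintype V] (pos neg : V → V → Prop)
    (hps : Symmetric pos) (hns : Symmetric neg)
    (hpi : ∀ v, ¬ pos v v) (hni : ∀ v, ¬ neg v v)
    (hd : ∀ u v, pos u v → ¬ neg u v) :
    1 ≤ fixc pos neg := by
  classical
  set P : Set (Set V) :=
    {S | (∀ v ∈ S, ∀ u, pos u v → u ∈ S) ∧ ∀ u ∈ S, ∀ v ∈ S, ¬ neg u v} with hPdef
  have hfin : P.Finite := Set.toFinite _
  have hne : P.Nonempty := ⟨∅, by simp [hPdef]⟩
  obtain ⟨S, hS, hmax⟩ := Set.Finite.exists_maximalFor id P hfin hne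
  have hfix : IsFixedSet pos neg S := by
    intro v
    constructor
    · intro hv
      exact ⟨fun u hu => hS.1 v hv u hu, fun u hun hu => hS.2 u hu v hv hun⟩
    · rintro ⟨hpos, hneg⟩
      by_contra hv
      have hS' : insert v S ∈ P := by
        constructor
        · intro w hw u hu
          rcases hw with rfl | hw
          · exact Or.inr (hpos u hu)
          · exact Or.inr (hS.1 w hw u hu)
        · intro a ha b hb hab
          rcases ha with ha | ha
          · subst ha
            rcases hb with hb | hb
            · subst hb; exact hni b hab
            · exact hneg b (hns hab) hb
          · rcases hb with hb | hb
            · subst hb; exact hneg a hab ha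
            · exact hS.2 a ha b hb hab
      have heq : S = insert v S :=
        (Set.subset_insert v S).antisymm (hmax hS' (Set.subset_insert v S))
      exact hv (heq ▸ Set.mem_insert v S)
  have hne' : {S : Set V | IsFixedSet pos neg S}.Nonempty := ⟨S, hfix⟩
  have : 0 < fixc pos neg := by
    rw [fixc, Set.ncard_pos (Set.toFinite _)]
    exact hne'
  omega
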